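/- Let ℒ = ΘL + LᵀΘ be the positive semi-definite matrix associated with a strongly connected weighted directed graph with N nodes, with ker ℒ = span{𝟏_N}. Let T = blockdiag(T₁,...,T_N) with each T_i ∈ ℝ^{n×n} orthogonal, and for each i let M_i = diag(m_i I_{v_i}, 0_{n−v_i}) with m_i > 0 and 1 ≤ v_i ≤ n, M = blockdiag(M₁,...,M_N). Assume for every nonzero x ∈ ℝ^n, there is some i such that the first v_i entries of T_iᵀx are not all zero (i.e., ⋂_i im(T_i[:, v_i+1:]) = {0}). Then Tᵀ(ℒ ⊗ I_n)T + M > 0. -/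

import Mathlib

open Matrix Kronecker

/-- Block diagonal matrix built from `N` blocks of size `n × n`. -/
def blockDiag {N n : ℕ} (f : Fin N → Matrix (Fin n) (Fin n) ℝ) :
    Matrix (Fin N × Fin n) (Fin N × Fin n) ℝ :=
  fun p q => if p.1 = q.1 then f p.1 p.2 q.2 else 0

lemma compS {N n : ℕ} (ℒ : Matrix (Fin N) (Fin N) ℝ) (y : Fin N × Fin n → ℝ) :
    y ⬝ᵥ ((ℒ ⊗ₖ (1 : Matrix (Fin n) (Fin n) ℝ)) *ᵥ y)
      = ∑ a : Fin n, (fun i => y (i, a)) ⬝ᵥ (ℒ *ᵥ fun i => y (i, a)) := by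
  simp only [dotProduct, mulVec, ← Finset.univ_product_univ, Finset.sum_product,
    kroneckerMap_apply, Matrix.one_apply, mul_ite, mul_one, mul_zero, ite_mul, zero_mul,
    Finset.sum_ite_eq', Finset.sum_ite_eq, Finset.mem_univ, if_true]
  exact Finset.sum_comm

lemma blockDiag_mulVec {N n : ℕ} (f : Fin N → Matrix (Fin n) (Fin n) ℝ)
    (x : Fin N × Fin n → ℝ) (i : Fin N) (a : Fin n) :
    (blockDiag f *ᵥ x) (i, a) = ((f i) *ᵥ fun b => x (i, b)) a := by
  simp only [mulVec, dotProduct, _root_.blockDiag, ← Finset.univ_product_univ, Finset.sum_product,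
    ite_mul, zero_mul]
  rw [Finset.sum_eq_single i]
  · simp
  · intro k _ hk
    simp [Ne.symm hk]
  · intro h
    exact absurd (Finset.mem_univ i) h

lemma T_inj {n : ℕ} (A : Matrix (Fin n) (Fin n) ℝ) (h : Aᵀ * A = 1)
    (u : Fin n → ℝ) (hu : A *ᵥ u = 0) : u = 0 := by
  have : Aᵀ *ᵥ (A *ᵥ u) = u := by
    rw [Matrix.mulVec_mulVec, h, Matrix.one_mulVec]
  rw [hu, Matrix.mulVec_zero] at this
  exact this.symm

/-- If `ℒ ⪰ 0` with `ker ℒ = span{𝟏}`, the `T_i` are orthogonal,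
`M_i = diag(m_i I_{v_i}, 0)` with `m_i > 0`, and the joint detectability condition
`⋂_i im(T_{i2}) = {0}` holds, then `Tᵀ(ℒ ⊗ I_n)T + M > 0`. -/
theorem stmt_8 {N n : ℕ} (ℒ : Matrix (Fin N) (Fin N) ℝ) (hℒ : ℒ.PosSemidef)
    (hker : ∀ x : Fin N → ℝ, ℒ.mulVec x = 0 ↔ ∃ c : ℝ, x = fun _ => c)
    (T : Fin N → Matrix (Fin n) (Fin n) ℝ) (hT : ∀ i, (T i)ᵀ * T i = 1)
    (v : Fin N → ℕ) (hv1 : ∀ i, 1 ≤ v i) (hvn : ∀ i, v i ≤ n)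
    (m : Fin N → ℝ) (hm : ∀ i, 0 < m i)
    (hjoint : ∀ x : Fin n → ℝ, x ≠ 0 →
      ∃ i, ∃ a : Fin n, (a : ℕ) < v i ∧ ((T i)ᵀ).mulVec x a ≠ 0) :
    ((blockDiag T)ᵀ * (ℒ ⊗ₖ (1 : Matrix (Fin n) (Fin n) ℝ)) * blockDiag T +
      blockDiag (fun i => Matrix.diagonal (fun j : Fin n => if (j : ℕ) < v i then m i else 0))).PosDef := by
  set B := blockDiag T with hBdef
  set S := ℒ ⊗ₖ (1 : Matrix (Fin n) (Fin n) ℝ) with hSdef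
  set Md := blockDiag (fun i =>
    Matrix.diagonal (fun j : Fin n => if (j : ℕ) < v i then m i else 0)) with hMdef
  have hsym : ∀ i k, ℒ k i = ℒ i k := by
    intro i k
    conv_lhs => rw [← hℒ.1]
    simp [conjTranspose_apply]
  -- S is positive semidefinite
  have hS : S.PosSemidef := by
    rw [posSemidef_iff_dotProduct_mulVec]
    constructor
    · ext ⟨i, a⟩ ⟨k, b⟩
      simp only [hSdef, conjTranspose_apply, kroneckerMap_apply, Matrix.one_apply, star_trivial,
        hsym k i]
      by_cases h : a = b <;> simp [h, eq_comm]
    · intro x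
      simp only [star_trivial, hSdef, compS]
      exact Finset.sum_nonneg fun a _ => by simpa using hℒ.dotProduct_mulVec_nonneg fun i => x (i, a)
  -- the quadratic form of Md
  have hMdvec : ∀ (x : Fin N × Fin n → ℝ) i a,
      (Md *ᵥ x) (i, a) = (if (a : ℕ) < v i then m i else 0) * x (i, a) := by
    intro x i a
    rw [hMdef, blockDiag_mulVec]
    simp [mulVec, dotProduct, Matrix.diagonal_apply, ite_mul, Finset.sum_ite_eq,
      Finset.sum_ite_eq']
  have hMdform : ∀ x : Fin N × Fin n → ℝ,
      x ⬝ᵥ (Md *ᵥ x) = ∑ p : Fin N × Fin n,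
        (if (p.2 : ℕ) < v p.1 then m p.1 else 0) * (x p * x p) := by
    intro x
    simp only [dotProduct]
    exact Finset.sum_congr rfl fun p _ => by
      obtain ⟨i, a⟩ := p
      rw [hMdvec]; ring
  have hMd : Md.PosSemidef := by
    rw [posSemidef_iff_dotProduct_mulVec]
    constructor
    · ext ⟨i, a⟩ ⟨k, b⟩
      simp only [hMdef, conjTranspose_apply, _root_.blockDiag, star_trivial,
        Matrix.diagonal_apply]
      by_cases h : i = k
      · subst h
        by_cases h2 : a = b <;> simp [h2, eq_comm]
      · simp [h, Ne.symm h]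
    · intro x
      simp only [star_trivial, hMdform]
      refine Finset.sum_nonneg fun p _ => mul_nonneg ?_ (mul_self_nonneg _)
      split <;> [exact le_of_lt (hm _); exact le_refl 0]
  -- the first summand is PSD
  have h1 : (Bᵀ * S * B).PosSemidef := by
    have := hS.conjTranspose_mul_mul_same B
    rwa [Matrix.conjTranspose_eq_transpose_of_trivial] at this
  -- the whole matrix is PSD
  have hA : (Bᵀ * S * B + Md).PosSemidef :=
    .of_dotProduct_mulVec_nonneg (h1.1.add hMd.1) fun x => by
      simpa [Matrix.add_mulVec, dotProduct_add] using add_nonneg (h1.dotProduct_mulVec_nonneg x) (hMd.dotProduct_mulVec_nonneg x)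
  refine .of_dotProduct_mulVec_pos hA.1 fun x hx => ?_
  rcases lt_or_eq_of_le (hA.dotProduct_mulVec_nonneg x) with h | h
  · exact h
  exfalso
  -- the quadratic form vanishes; decompose it
  have hq1form : x ⬝ᵥ ((Bᵀ * S * B) *ᵥ x) = (B *ᵥ x) ⬝ᵥ (S *ᵥ (B *ᵥ x)) := by
    rw [← Matrix.mulVec_mulVec, ← Matrix.mulVec_mulVec, Matrix.dotProduct_mulVec,
      Matrix.vecMul_transpose]
  have hq1nonneg : 0 ≤ x ⬝ᵥ ((Bᵀ * S * B) *ᵥ x) := by simpa using h1.dotProduct_mulVec_nonneg x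
  have hq2nonneg : 0 ≤ x ⬝ᵥ (Md *ᵥ x) := by simpa using hMd.dotProduct_mulVec_nonneg x
  have hsum : x ⬝ᵥ ((Bᵀ * S * B) *ᵥ x) + x ⬝ᵥ (Md *ᵥ x) = 0 := by
    have := h.symm
    simp only [star_trivial] at this
    rw [Matrix.add_mulVec, dotProduct_add] at this
    exact this
  have hq1 : x ⬝ᵥ ((Bᵀ * S * B) *ᵥ x) = 0 := le_antisymm (by linarith) hq1nonneg
  have hq2 : x ⬝ᵥ (Md *ᵥ x) = 0 := le_antisymm (by linarith) hq2nonneg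
  -- from hq2 : x vanishes on the first v i coordinates of each block
  have hxz : ∀ i : Fin N, ∀ a : Fin n, (a : ℕ) < v i → x (i, a) = 0 := by
    intro i a ha
    rw [hMdform] at hq2
    have := (Finset.sum_eq_zero_iff_of_nonneg (fun p _ => by
      refine mul_nonneg ?_ (mul_self_nonneg _)
      split <;> [exact le_of_lt (hm _); exact le_refl 0])).mp hq2 (i, a) (Finset.mem_univ _)
    simp only [ha, if_true] at this
    rcases mul_eq_zero.mp this with h' | h'
    · exact absurd h' (ne_of_gt (hm i))
    · exact mul_self_eq_zero.mp h'
  -- from hq1 : each column of B *ᵥ x is constant across blocks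
  have hconst : ∀ a : Fin n, ∃ c : ℝ, (fun i => (B *ᵥ x) (i, a)) = fun _ => c := by
    intro a
    rw [hq1form, hSdef, compS] at hq1
    have := (Finset.sum_eq_zero_iff_of_nonneg (fun a _ => by
      simpa using hℒ.dotProduct_mulVec_nonneg fun i => (B *ᵥ x) (i, a))).mp hq1 a (Finset.mem_univ _)
    have hz : ℒ *ᵥ (fun i => (B *ᵥ x) (i, a)) = 0 := by
      refine (hℒ.dotProduct_mulVec_zero_iff _).mp ?_
      simpa using this
    exact (hker _).mp hz
  -- get the witness of x ≠ 0
  obtain ⟨p, hp⟩ : ∃ p, x p ≠ 0 := Function.ne_iff.mp hx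
  set z : Fin n → ℝ := fun a => (B *ᵥ x) (p.1, a) with hzdef
  have hzi : ∀ i : Fin N, (T i) *ᵥ (fun b => x (i, b)) = z := by
    intro i
    funext a
    obtain ⟨c, hc⟩ := hconst a
    have h1' := congrFun hc i
    have h2' := congrFun hc p.1
    rw [hzdef]
    simp only at h1' h2' ⊢
    rw [← blockDiag_mulVec T x i a, ← hBdef, h1', h2']
  have hzne : z ≠ 0 := by
    intro hz0
    have := T_inj (T p.1) (hT p.1) (fun b => x (p.1, b)) (by rw [hzi p.1, hz0])
    exact hp (by simpa using congrFun this p.2)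
  obtain ⟨i, a, hav, hne⟩ := hjoint z hzne
  apply hne
  have : (T i)ᵀ *ᵥ z = fun b => x (i, b) := by
    rw [← hzi i, Matrix.mulVec_mulVec, hT i, Matrix.one_mulVec]
  rw [Matrix.mulVec, ← Matrix.mulVec]
  rw [this]
  exact hxz i a hav
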